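/- arXiv:2302.12752 — 9 statements merged into one kernel-verified Lean document; each statement's English description precedes it below -/
import Mathlib

section
/- Let G be a finite simple graph with minimum degree δ(G) ≥ α̃(G), where α̃(G) is the bipartite independence number. Then G is connected. -/
open SimpleGraph Finset

variable {V : Type*}

/-- Between every two disjoint vertex sets of sizes `a` and `b` there is an edge. -/
def HasEdgeBetween (G : SimpleGraph V) (a b : ℕ) : Prop :=
  ∀ A B : Finset V, Disjoint A B → A.card = a → B.card = b →
    ∃ x ∈ A, ∃ y ∈ B, G.Adj x y

/-- The bipartite independence number α̃(G). -/
noncomputable def biAlpha (G : SimpleGraph V) : ℕ :=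
  sInf {k | ∃ a b : ℕ, 0 < a ∧ 0 < b ∧ a + b = k + 1 ∧ HasEdgeBetween G a b}

/-- `s` is an independent set in `G`. -/
def IsIndepSet (G : SimpleGraph V) (s : Finset V) : Prop :=
  ∀ x ∈ s, ∀ y ∈ s, x ≠ y → ¬ G.Adj x y

/-- The independence number α(G). -/
noncomputable def indepNum (G : SimpleGraph V) : ℕ :=
  sSup {n | ∃ s : Finset V, _root_.IsIndepSet G s ∧ s.card = n}

/-- The graph C̃_ℓ: a cycle of length ℓ together with an extra vertex adjacent to
two consecutive vertices of the cycle. -/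
def tildeC (ℓ : ℕ) : SimpleGraph (Fin ℓ ⊕ Unit) :=
  SimpleGraph.fromRel (fun x y =>
    match x, y with
    | Sum.inl i, Sum.inl j => (i.val + 1) % ℓ = j.val
    | Sum.inl i, Sum.inr _ => i.val = 0 ∨ i.val = 1
    | _, _ => False)

/-- `G` contains a (not necessarily induced) copy of `H`. -/
def ContainsCopy {W : Type*} (H : SimpleGraph W) (G : SimpleGraph V) : Prop :=
  ∃ f : H →g G, Function.Injective f

/-- `G` is pancyclic: it has cycles of every length from 3 to `|V|`. -/
def Pancyclic (G : SimpleGraph V) [Fintype V] : Prop :=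
  ∀ ℓ, 3 ≤ ℓ → ℓ ≤ Fintype.card V →
    ∃ (v : V) (c : G.Walk v v), c.IsCycle ∧ c.length = ℓ

theorem connected_of_minDegree_ge_biAlpha [Fintype V] (G : SimpleGraph V)
    [DecidableRel G.Adj] (h : biAlpha G ≤ G.minDegree) :
    G.Connected := by
  classical
  set S := {k | ∃ a b : ℕ, 0 < a ∧ 0 < b ∧ a + b = k + 1 ∧ HasEdgeBetween G a b} with hSdef
  have hS : (Fintype.card V + 1) ∈ S := by
    refine ⟨Fintype.card V + 1, 1, Nat.succ_pos _, Nat.one_pos, rfl, ?_⟩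
    intro A B _ hA _
    exfalso
    have := Finset.card_le_univ A
    omega
  have hmem : biAlpha G ∈ S := Nat.sInf_mem ⟨_, hS⟩
  obtain ⟨a, b, ha, hb, hab, hedge⟩ := hmem
  have h1 : 1 ≤ biAlpha G := by omega
  have hmd : 1 ≤ G.minDegree := le_trans h1 h
  have hne : Nonempty V := by
    by_contra hv
    rw [not_nonempty_iff] at hv
    have : G.minDegree = 0 := by
      simp [SimpleGraph.minDegree, Finset.univ_eq_empty]
    omega
  rw [SimpleGraph.connected_iff]
  refine ⟨?_, hne⟩
  intro u v
  by_contra hr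
  set C : Finset V := Finset.univ.filter (fun w => G.Reachable u w) with hC
  have hclosed : ∀ x ∈ C, ∀ y, G.Adj x y → y ∈ C := by
    intro x hx y hxy
    simp only [hC, Finset.mem_filter, Finset.mem_univ, true_and] at hx ⊢
    exact hx.trans hxy.reachable
  -- C is large
  have hCcard : a ≤ C.card := by
    have hsub : insert u (G.neighborFinset u) ⊆ C := by
      intro w hw
      rcases Finset.mem_insert.mp hw with rfl | hw
      · simp only [hC, Finset.mem_filter, Finset.mem_univ, true_and]
        exact SimpleGraph.Reachable.refl _
      · simp only [hC, Finset.mem_filter, Finset.mem_univ, true_and]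
        exact ((G.mem_neighborFinset u w).mp hw).reachable
    have hcard : G.degree u + 1 ≤ C.card := by
      have := Finset.card_le_card hsub
      rwa [Finset.card_insert_of_notMem (by simp), SimpleGraph.card_neighborFinset_eq_degree] at this
    have := G.minDegree_le_degree u
    omega
  -- the complement is large
  have hvD : v ∈ Cᶜ := by
    simp only [Finset.mem_compl, hC, Finset.mem_filter, Finset.mem_univ, true_and]
    exact hr
  have hDcard : b ≤ Cᶜ.card := by
    have hsub : insert v (G.neighborFinset v) ⊆ Cᶜ := by
      intro w hw
      rcases Finset.mem_insert.mp hw with rfl | hw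
      · exact hvD
      · simp only [Finset.mem_compl]
        intro hwC
        exact (Finset.mem_compl.mp hvD)
          (hclosed w hwC v ((G.mem_neighborFinset v w).mp hw).symm)
    have hcard : G.degree v + 1 ≤ Cᶜ.card := by
      have := Finset.card_le_card hsub
      rwa [Finset.card_insert_of_notMem (by simp), SimpleGraph.card_neighborFinset_eq_degree] at this
    have := G.minDegree_le_degree v
    omega
  obtain ⟨A, hAC, hAcard⟩ := Finset.exists_subset_card_eq hCcard
  obtain ⟨B, hBD, hBcard⟩ := Finset.exists_subset_card_eq hDcard
  have hdisj : Disjoint A B :=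
    Finset.disjoint_left.mpr fun x hxA hxB =>
      Finset.mem_compl.mp (hBD hxB) (hAC hxA)
  obtain ⟨x, hxA, y, hyB, hxy⟩ := hedge A B hdisj hAcard hBcard
  exact Finset.mem_compl.mp (hBD hyB) (hclosed x (hAC hxA) y hxy)
end

section
/- Let G be a finite simple graph with minimum degree δ(G) ≥ α̃(G). Then G contains a triangle or G is bipartite. -/
open SimpleGraph Finset

variable {V : Type*}

private lemma helper_nbr [Fintype V] [DecidableEq V] (G : SimpleGraph V) [DecidableRel G.Adj]
    (htri : ∀ x y z : V, G.Adj x y → G.Adj y z → ¬ G.Adj x z)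
    {a b : ℕ} (hb : 0 < b) (hE : HasEdgeBetween G a b)
    (v w : V) (hvw : ¬ G.Adj v w)
    (hd : a + b = G.degree v + 1) :
    b ≤ (G.neighborFinset w ∩ G.neighborFinset v).card := by
  classical
  by_contra hc
  push_neg at hc
  set N := G.neighborFinset v with hN
  have hwN : w ∉ N := by
    rw [hN, SimpleGraph.mem_neighborFinset]; exact hvw
  have hNcard : N.card = G.degree v := G.card_neighborFinset_eq_degree v
  have hsplit : (N ∩ G.neighborFinset w).card + (N \ G.neighborFinset w).card = N.card :=
    Finset.card_inter_add_card_sdiff N (G.neighborFinset w)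
  have hcomm : (N ∩ G.neighborFinset w).card = (G.neighborFinset w ∩ N).card := by
    rw [Finset.inter_comm]
  have hM : a ≤ (N \ G.neighborFinset w).card := by omega
  obtain ⟨A, hAsub, hAcard⟩ := Finset.exists_subset_card_eq (s := _) (n := a) hM
  have hAN : A ⊆ N := hAsub.trans Finset.sdiff_subset
  have hBcard : (insert w (N \ A)).card = b := by
    rw [Finset.card_insert_of_notMem (fun hw => hwN (Finset.sdiff_subset hw)),
        Finset.card_sdiff_of_subset hAN, hAcard]
    omega
  have hdisj : Disjoint A (insert w (N \ A)) := by
    rw [Finset.disjoint_left]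
    intro z hzA hzB
    rcases Finset.mem_insert.mp hzB with rfl | hz
    · exact hwN (hAN hzA)
    · exact (Finset.mem_sdiff.mp hz).2 hzA
  obtain ⟨x, hxA, y, hyB, hxy⟩ := hE A _ hdisj hAcard hBcard
  rcases Finset.mem_insert.mp hyB with rfl | hy
  · have hxw : x ∈ G.neighborFinset y := by
      rw [SimpleGraph.mem_neighborFinset]; exact hxy.symm
    exact (Finset.mem_sdiff.mp (hAsub hxA)).2 hxw
  · have hvx : G.Adj v x := (G.mem_neighborFinset _ _).mp (hAN hxA)
    have hvy : G.Adj v y := (G.mem_neighborFinset _ _).mp (Finset.mem_sdiff.mp hy).1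
    exact htri v x y hvx hxy hvy

theorem triangle_or_bipartite [Fintype V] (G : SimpleGraph V)
    [DecidableRel G.Adj] (h : biAlpha G ≤ G.minDegree) :
    (∃ x y z : V, G.Adj x y ∧ G.Adj y z ∧ G.Adj x z) ∨ G.Colorable 2 := by
  classical
  by_cases htri : ∃ x y z : V, G.Adj x y ∧ G.Adj y z ∧ G.Adj x z
  · exact Or.inl htri
  right
  push_neg at htri
  cases isEmpty_or_nonempty V with
  | inl hV =>
    exact ⟨SimpleGraph.Coloring.mk (fun z => isEmptyElim z) (fun {u w} _ => isEmptyElim u)⟩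
  | inr hV =>
  have hne : (Fintype.card V + 1) ∈
      {k | ∃ a b : ℕ, 0 < a ∧ 0 < b ∧ a + b = k + 1 ∧ HasEdgeBetween G a b} := by
    refine ⟨1, Fintype.card V + 1, one_pos, Nat.succ_pos _, by ring, ?_⟩
    intro A B _ _ hB
    have hle := Finset.card_le_univ B
    omega
  have hmem : biAlpha G ∈
      {k | ∃ a b : ℕ, 0 < a ∧ 0 < b ∧ a + b = k + 1 ∧ HasEdgeBetween G a b} :=
    Nat.sInf_mem ⟨_, hne⟩
  obtain ⟨a, b, ha, hb, hab, hE⟩ := hmem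
  set v := Classical.arbitrary V with hv
  set N := G.neighborFinset v with hN
  have hNcard : N.card = G.degree v := G.card_neighborFinset_eq_degree v
  have hmd : G.minDegree ≤ G.degree v := G.minDegree_le_degree v
  by_cases hcase : a + b ≤ G.degree v
  · exfalso
    obtain ⟨A, hAN, hAcard⟩ := Finset.exists_subset_card_eq (s := N) (n := a) (by omega)
    obtain ⟨B, hBsub, hBcard⟩ := Finset.exists_subset_card_eq (s := N \ A) (n := b)
      (by rw [Finset.card_sdiff_of_subset hAN]; omega)
    have hdisj : Disjoint A B := Finset.disjoint_left.mpr
      (fun z hz hz' => (Finset.mem_sdiff.mp (hBsub hz')).2 hz)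
    obtain ⟨x, hxA, y, hyB, hxy⟩ := hE A B hdisj hAcard hBcard
    have hvx : G.Adj v x := (G.mem_neighborFinset _ _).mp (hAN hxA)
    have hvy : G.Adj v y :=
      (G.mem_neighborFinset _ _).mp (Finset.mem_sdiff.mp (hBsub hyB)).1
    exact htri v x y hvx hxy hvy
  · have hd : a + b = G.degree v + 1 := by omega
    refine ⟨SimpleGraph.Coloring.mk (fun z => if G.Adj v z then 1 else 0) ?_⟩
    intro x y hxy hcxy
    by_cases hvx : G.Adj v x
    · by_cases hvy : G.Adj v y
      · exact htri v x y hvx hxy hvy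
      · simp only [hvx, hvy, if_true, if_false] at hcxy
        exact absurd hcxy (by decide)
    · by_cases hvy : G.Adj v y
      · simp only [hvx, hvy, if_true, if_false] at hcxy
        exact absurd hcxy (by decide)
      · have hE' : HasEdgeBetween G b a := by
          intro A B hd' hA hB
          obtain ⟨p, hp, q, hq, hpq⟩ := hE B A hd'.symm hB hA
          exact ⟨q, hq, p, hp, hpq.symm⟩
        have h1 : b ≤ (G.neighborFinset x ∩ N).card :=
          helper_nbr G htri hb hE v x hvx hd
        have h2 : a ≤ (G.neighborFinset y ∩ N).card :=
          helper_nbr G htri ha hE' v y hvy (by omega)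
        have hdisj : Disjoint (G.neighborFinset x ∩ N) (G.neighborFinset y ∩ N) := by
          rw [Finset.disjoint_left]
          intro w hw1 hw2
          have hxw : G.Adj x w :=
            (G.mem_neighborFinset _ _).mp (Finset.mem_inter.mp hw1).1
          have hyw : G.Adj y w :=
            (G.mem_neighborFinset _ _).mp (Finset.mem_inter.mp hw2).1
          exact htri x w y hxw hyw.symm hxy
        have hsub : (G.neighborFinset x ∩ N) ∪ (G.neighborFinset y ∩ N) ⊆ N :=
          Finset.union_subset Finset.inter_subset_right Finset.inter_subset_right
        have hcard := Finset.card_le_card hsub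
        rw [Finset.card_union_of_disjoint hdisj] at hcard
        omega
end

section
/- Let G be a finite simple triangle-free graph, let k be a natural number with δ(G) ≥ k, and suppose there exist positive integers a ≤ b with a + b = k + 1 such that every pair of disjoint vertex sets of sizes a and b has an edge between them. Assume additionally that every vertex of G has degree exactly k and no vertex neighborhood contains an edge. Then any two non-adjacent vertices u, v of G have at least b common neighbors. -/
open SimpleGraph Finset

variable {V : Type*}

theorem common_neighbors_of_triangleFree [Fintype V] [DecidableEq V]
    (G : SimpleGraph V) [DecidableRel G.Adj] (k a b : ℕ)
    (hδ : k ≤ G.minDegree) (ha : 0 < a) (hab : a ≤ b) (hsum : a + b = k + 1)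
    (hE : HasEdgeBetween G a b)
    (htf : G.CliqueFree 3)
    (hreg : ∀ v : V, G.degree v = k)
    (hnbhd : ∀ v x y : V, G.Adj v x → G.Adj v y → ¬ G.Adj x y)
    (u v : V) (huv : u ≠ v) (hna : ¬ G.Adj u v) :
    b ≤ (G.neighborFinset u ∩ G.neighborFinset v).card := by
  by_contra hlt
  push_neg at hlt
  set N := G.neighborFinset u with hN
  set Nv := G.neighborFinset v with hNv
  have hvN : v ∉ N := by simp [hN, hna]
  have hNcard : N.card = k := by simpa [hN] using hreg u
  have hcle : (N ∩ Nv).card ≤ b - 1 := Nat.le_pred_of_lt hlt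
  have hdiff : a ≤ (N \ Nv).card := by
    have h1 := Finset.card_sdiff_add_card_inter N Nv
    omega
  obtain ⟨A, hAsub, hAcard⟩ := Finset.exists_subset_card_eq hdiff
  have hAN : A ⊆ N := hAsub.trans (Finset.sdiff_subset)
  have hvA : v ∉ A := fun h => hvN (hAN h)
  set B := insert v (N \ A) with hB
  have hvND : v ∉ N \ A := fun h => hvN (Finset.mem_sdiff.mp h).1
  have hBcard : B.card = b := by
    rw [hB, Finset.card_insert_of_notMem hvND, Finset.card_sdiff_of_subset hAN, hNcard, hAcard]
    omega
  have hdisj : Disjoint A B := by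
    rw [hB, Finset.disjoint_insert_right]
    exact ⟨hvA, Finset.sdiff_disjoint.symm⟩
  obtain ⟨x, hxA, y, hyB, hxy⟩ := hE A B hdisj hAcard hBcard
  rw [hB, Finset.mem_insert] at hyB
  rcases hyB with rfl | hyN
  · exact (Finset.mem_sdiff.mp (hAsub hxA)).2
      (by simpa [hNv] using hxy.symm)
  · exact hnbhd u x y (by simpa [hN] using hAN hxA)
      (by simpa [hN] using (Finset.mem_sdiff.mp hyN).1) hxy
end

section
/- Let G be a finite simple triangle-free graph in which any two non-adjacent vertices have at least m common neighbors, where 2m exceeds the maximum degree of G. Then G contains no induced odd cycle of length at least 5; consequently G is bipartite. -/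
open SimpleGraph Finset

variable {V : Type*}

open Fin.CommRing in
/-- A closed walk of length `n + 2` in the cycle graph on `n + 2` vertices. -/
lemma cycleGraph_closed_walk (n : ℕ) :
    ∃ w : (SimpleGraph.cycleGraph (n + 2)).Walk 0 0, w.length = n + 2 := by
  have key : ∀ k : ℕ, ∃ w : (SimpleGraph.cycleGraph (n + 2)).Walk 0 (k : Fin (n + 2)),
      w.length = k := by
    intro k
    induction k with
    | zero => exact ⟨Walk.nil.copy rfl (by simp), by simp⟩
    | succ k ih =>
      obtain ⟨w, hw⟩ := ih
      have hadj : (SimpleGraph.cycleGraph (n + 2)).Adj (k : Fin (n + 2))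
          (((k + 1 : ℕ) : Fin (n + 2))) := by
        rw [cycleGraph_adj]
        right
        push_cast
        ring
      exact ⟨w.concat hadj, by simp [hw]⟩
  obtain ⟨w, hw⟩ := key (n + 2)
  exact ⟨w.copy rfl (by simp), by simp [hw]⟩

/-- Under the hypotheses, `G` has no closed walk of odd length. -/
lemma no_odd_closed_walk [Fintype V] [DecidableEq V]
    (G : SimpleGraph V) [DecidableRel G.Adj] (m : ℕ)
    (htf : G.CliqueFree 3)
    (hcommon : ∀ u v : V, u ≠ v → ¬ G.Adj u v →
      m ≤ (G.neighborFinset u ∩ G.neighborFinset v).card)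
    (hmax : G.maxDegree < 2 * m) :
    ∀ (v : V) (w : G.Walk v v), ¬ Odd w.length := by
  by_contra h
  push_neg at h
  obtain ⟨v₀, w₀, hodd₀⟩ := h
  classical
  have htri : ∀ a b c : V, G.Adj a b → G.Adj a c → G.Adj b c → False := fun a b c hab hac hbc =>
    htf {a, b, c} (is3Clique_triple_iff.mpr ⟨hab, hac, hbc⟩)
  have hS : ∃ n, Odd n ∧ ∃ (v : V) (w : G.Walk v v), w.length = n :=
    ⟨_, hodd₀, v₀, w₀, rfl⟩
  obtain ⟨hodd, v, w, hlen⟩ := Nat.find_spec hS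
  have hmin : ∀ k, k < Nat.find hS → ¬ (Odd k ∧ ∃ (v : V) (w : G.Walk v v), w.length = k) :=
    fun k hk => Nat.find_min hS hk
  rw [Nat.odd_iff] at hodd
  cases w with
  | nil => simp at hlen; omega
  | cons h₁ w₁ =>
    cases w₁ with
    | nil => exact G.loopless.irrefl v h₁
    | cons h₂ w₂ =>
      cases w₂ with
      | nil => simp at hlen; omega
      | cons h₃ w₃ =>
        rename_i u₁ u₂ u₃
        simp only [Walk.length_cons] at hlen
        -- v ~ u₁ ~ u₂ ~ u₃, with w₃ : Walk u₃ v of length (Nat.find hS) - 3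
        have hvu₂ : v ≠ u₂ := by
          intro heq
          subst heq
          exact hmin (w₃.length + 1) (by omega)
            ⟨by rw [Nat.odd_iff]; omega, v, Walk.cons h₃ w₃, by simp⟩
        have hnadj₂ : ¬ G.Adj v u₂ := fun hadj => htri v u₁ u₂ h₁ hadj h₂
        have hvu₃ : v ≠ u₃ := by
          intro heq
          subst heq
          exact hnadj₂ h₃.symm
        have hnadj₃ : ¬ G.Adj v u₃ := by
          intro hadj
          exact hmin (w₃.length + 1) (by omega)
            ⟨by rw [Nat.odd_iff]; omega, v, Walk.cons hadj w₃, by simp⟩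
        have hb := hcommon v u₂ hvu₂ hnadj₂
        have hc := hcommon v u₃ hvu₃ hnadj₃
        have hdisj : Disjoint (G.neighborFinset v ∩ G.neighborFinset u₂)
            (G.neighborFinset v ∩ G.neighborFinset u₃) := by
          rw [Finset.disjoint_left]
          intro x hx hx'
          simp only [Finset.mem_inter, mem_neighborFinset] at hx hx'
          exact htri u₂ u₃ x h₃ hx.2 hx'.2
        have hsub : (G.neighborFinset v ∩ G.neighborFinset u₂) ∪
            (G.neighborFinset v ∩ G.neighborFinset u₃) ⊆ G.neighborFinset v :=
          Finset.union_subset Finset.inter_subset_left Finset.inter_subset_left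
        have hcard := Finset.card_union_of_disjoint hdisj
        have hle := Finset.card_le_card hsub
        have hdeg : (G.neighborFinset v).card = G.degree v := rfl
        have hdm := G.degree_le_maxDegree v
        omega

theorem no_induced_odd_cycle [Fintype V] [DecidableEq V]
    (G : SimpleGraph V) [DecidableRel G.Adj] (m : ℕ)
    (htf : G.CliqueFree 3)
    (hcommon : ∀ u v : V, u ≠ v → ¬ G.Adj u v →
      m ≤ (G.neighborFinset u ∩ G.neighborFinset v).card)
    (hmax : G.maxDegree < 2 * m) :
    (∀ ℓ : ℕ, 5 ≤ ℓ → Odd ℓ → IsEmpty (SimpleGraph.cycleGraph ℓ ↪g G)) ∧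
      G.Colorable 2 := by
  classical
  have key := no_odd_closed_walk G m htf hcommon hmax
  constructor
  · intro ℓ hℓ hoddℓ
    obtain ⟨n, rfl⟩ : ∃ n, ℓ = n + 2 := ⟨ℓ - 2, by omega⟩
    constructor
    intro e
    obtain ⟨w, hw⟩ := cycleGraph_closed_walk n
    exact key (e 0) (w.map e.toHom) (by simpa [hw] using hoddℓ)
  · let root : V → V := fun v => (G.connectedComponentMk v).out
    have hreach : ∀ v, G.Reachable (root v) v := fun v =>
      ConnectedComponent.exact (Quot.out_eq (G.connectedComponentMk v))
    have hco : G.Coloring Bool := by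
      refine Coloring.mk (fun v => decide (∃ p : G.Walk (root v) v, Odd p.length)) ?_
      intro u v hadj hcc
      simp only [decide_eq_decide] at hcc
      have hroot : root u = root v := by
        show Quot.out (G.connectedComponentMk u) = Quot.out (G.connectedComponentMk v)
        rw [ConnectedComponent.sound hadj.reachable]
      by_cases hP : ∃ p : G.Walk (root u) u, Odd p.length
      · obtain ⟨p, hp⟩ := hP
        obtain ⟨q, hq⟩ := hcc.mp ⟨p, hp⟩
        have wuu : G.Walk u u :=
          p.reverse.append ((q.copy hroot.symm rfl).append hadj.symm.toWalk)
        refine key u (p.reverse.append ((q.copy hroot.symm rfl).append hadj.symm.toWalk)) ?_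
        simp only [Walk.length_append, Walk.length_reverse, Walk.length_copy, Adj.toWalk,
          Walk.length_cons, Walk.length_nil]
        rw [Nat.odd_iff] at hp hq ⊢
        omega
      · have hQ : ¬ ∃ q : G.Walk (root v) v, Odd q.length := fun h => hP (hcc.mpr h)
        push_neg at hP hQ
        obtain ⟨p⟩ := hreach u
        obtain ⟨q⟩ := hreach v
        refine key u (p.reverse.append ((q.copy hroot.symm rfl).append hadj.symm.toWalk)) ?_
        have hp := hP p
        have hq := hQ q
        simp only [Walk.length_append, Walk.length_reverse, Walk.length_copy, Adj.toWalk,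
          Walk.length_cons, Walk.length_nil]
        rw [Nat.odd_iff] at hp hq ⊢
        omega
    simpa using hco.colorable
end

section
/- Let G be a finite simple graph such that between every two disjoint vertex sets of size 2 there is an edge. Let C be a cycle in G of length ℓ with 6 ≤ ℓ ≤ |V(G)| − 2. Then G contains a cycle of length ℓ + 1. -/
open SimpleGraph Finset

variable {V : Type*}

section Aux
variable {G : SimpleGraph V}


lemma support_getElem' {u v : V} (p : G.Walk u v) (n : ℕ) (h : n < p.support.length) :
    p.support[n] = p.getVert n := by
  induction p generalizing n with
  | nil => simp only [Walk.support_nil, List.length_singleton] at h; interval_cases n <;> simp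
  | cons hadj q ih =>
    cases n with
    | zero => simp
    | succ m =>
      simp only [Walk.support_cons, List.getElem_cons_succ, Walk.getVert_cons_succ]
      exact ih m (by simp only [Walk.support_cons, List.length_cons] at h; omega)

lemma IsCycle.getVert_inj {v : V} {c : G.Walk v v} (hc : c.IsCycle) {a b : ℕ}
    (ha : a < c.length) (hb : b < c.length) (h : c.getVert a = c.getVert b) : a = b := by
  have hnd := hc.support_nodup
  have hlen : c.support.tail.length = c.length := by
    have := c.length_support; simp [List.length_tail, this]
  have ht : ∀ n (hn : n < c.support.tail.length), c.support.tail[n] = c.getVert (n+1) := by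
    intro n hn
    have hcons := c.support_eq_cons
    have h2 : n + 1 < c.support.length := by
      rw [c.length_support]; rw [List.length_tail, c.length_support] at hn; omega
    have h3 : c.support.tail[n] = (v :: c.support.tail)[n+1]'(by simp; omega) := by simp
    rw [h3]
    have h4 : (v :: c.support.tail)[n+1]'(by rw [← hcons]; exact h2) = c.support[n+1] := by
      congr 1 <;> rw [← hcons]
    rw [h4, support_getElem' c (n+1) h2]
  have key : ∀ m n, m < c.length → n < c.length → c.getVert (m+1) = c.getVert (n+1) → m = n := by
    intro m n hm hn hmn
    have := (List.Nodup.getElem_inj_iff hnd (i := m) (j := n)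
      (hi := by omega) (hj := by omega))
    rw [ht m (by omega), ht n (by omega)] at this
    exact this.1 hmn
  rcases Nat.eq_zero_or_pos a with ha0 | ha1 <;> rcases Nat.eq_zero_or_pos b with hb0 | hb1
  · omega
  · exfalso
    subst ha0
    have h0 : c.getVert 0 = c.getVert c.length := by simp [Walk.getVert_length]
    have := key (c.length - 1) (b - 1) (by omega) (by omega)
      (by rw [Nat.sub_add_cancel (by omega), Nat.sub_add_cancel (by omega)]; rw [← h0, h])
    omega
  · exfalso
    subst hb0
    have h0 : c.getVert 0 = c.getVert c.length := by simp [Walk.getVert_length]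
    have := key (a - 1) (c.length - 1) (by omega) (by omega)
      (by rw [Nat.sub_add_cancel (by omega), Nat.sub_add_cancel (by omega)]; rw [← h0, ← h])
    omega
  · have := key (a-1) (b-1) (by omega) (by omega)
      (by rw [Nat.sub_add_cancel ha1, Nat.sub_add_cancel hb1]; exact h)
    omega

lemma exists_walk_seq (f : ℕ → V) (n : ℕ)
    (hadj : ∀ k, k + 1 < n → G.Adj (f k) (f (k+1))) :
    ∀ t m, m + t = n - 1 → ∃ p : G.Walk (f m) (f (n-1)), p.length = t ∧
      p.support = (List.range' m (t+1)).map f ∧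
      p.edges = (List.range' m t).map (fun k => s(f k, f (k+1))) := by
  intro t
  induction t with
  | zero =>
    intro m hm
    have : m = n - 1 := by omega
    subst this
    exact ⟨Walk.nil, by simp, by simp, by simp⟩
  | succ t ih =>
    intro m hm
    obtain ⟨q, hq1, hq2, hq3⟩ := ih (m+1) (by omega)
    refine ⟨Walk.cons (hadj m (by omega)) q, by simp [hq1], ?_, ?_⟩
    · simp [hq2, List.range'_succ]
    · simp [hq3, List.range'_succ]

lemma cycle_of_fn (n : ℕ) (hn : 3 ≤ n) (f : ℕ → V)
    (hinj : ∀ a, a < n → ∀ b, b < n → f a = f b → a = b)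
    (hadj : ∀ k, k + 1 < n → G.Adj (f k) (f (k+1)))
    (hwrap : G.Adj (f (n-1)) (f 0)) :
    ∃ (w : V) (c : G.Walk w w), c.IsCycle ∧ c.length = n := by
  obtain ⟨p, hp1, hp2, hp3⟩ := exists_walk_seq f n hadj (n-1) 0 (by omega)
  refine ⟨f 0, Walk.cons hwrap.symm p.reverse, ?_, ?_⟩
  · rw [Walk.cons_isCycle_iff]
    constructor
    · rw [Walk.isPath_reverse_iff, Walk.isPath_def, hp2]
      refine List.Nodup.map_on ?_ (List.nodup_range')
      intro a ha b hb hab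
      rw [List.mem_range'] at ha hb
      exact hinj a (by omega) b (by omega) hab
    · rw [Walk.edges_reverse, List.mem_reverse, hp3]
      intro hmem
      rw [List.mem_map] at hmem
      obtain ⟨k, hk, hk2⟩ := hmem
      rw [List.mem_range'] at hk
      rw [Sym2.eq_iff] at hk2
      rcases hk2 with ⟨h1, h2⟩ | ⟨h1, h2⟩
      · have := hinj k (by omega) 0 (by omega) h1
        subst this
        have := hinj 1 (by omega) (n-1) (by omega) h2
        omega
      · have := hinj k (by omega) (n-1) (by omega) h1
        have := hinj (k+1) (by omega) 0 (by omega) h2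
        omega
  · simp [hp1]; omega


lemma bridge_cycle {ℓ : ℕ} (h6 : 6 ≤ ℓ) (f : ZMod ℓ → V)
    (hinj : Function.Injective f)
    (hadj : ∀ k : ZMod ℓ, G.Adj (f k) (f (k+1)))
    {z : V} (hz : ∀ k, f k ≠ z)
    {i j : ZMod ℓ} (hij : i ≠ j)
    (hzi : G.Adj z (f i)) (hzj : G.Adj z (f j))
    (hch : G.Adj (f (i+1)) (f (j+1))) :
    ∃ (w : V) (c : G.Walk w w), c.IsCycle ∧ c.length = ℓ + 1 := by
  haveI : NeZero ℓ := ⟨by omega⟩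
  set d : ℕ := (j - i).val with hd
  have hdc : ((d : ℕ) : ZMod ℓ) = j - i := ZMod.natCast_rightInverse _
  have hd0 : 0 < d := by
    rcases Nat.eq_zero_or_pos d with h0 | h1
    · exfalso
      have h2 : j - i = 0 := by rwa [ZMod.val_eq_zero] at h0
      exact hij (sub_eq_zero.mp h2).symm
    · exact h1
  have hdl : d < ℓ := ZMod.val_lt _
  set g : ℕ → V := fun t => if t = 0 then z else if t ≤ d then f ((j : ZMod ℓ) + 1 - (t : ZMod ℓ))
    else f ((j : ZMod ℓ) + ((t - d : ℕ) : ZMod ℓ)) with hg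
  have hg0 : g 0 = z := by simp [hg]
  have hgmid : ∀ t, 1 ≤ t → t ≤ d → g t = f (j + 1 - (t : ZMod ℓ)) := by
    intro t h1 h2
    have h0 : t ≠ 0 := by omega
    simp [hg, h0, h2]
  have hgtop : ∀ t, d < t → g t = f (j + ((t - d : ℕ) : ZMod ℓ)) := by
    intro t h1
    have : ¬ (t = 0) := by omega
    have h2 : ¬ (t ≤ d) := by omega
    simp [hg, this, h2]
  -- cast helper
  have hcast : ∀ a b : ℕ, a ≤ ℓ → b ≤ ℓ → ((a : ZMod ℓ) = (b : ZMod ℓ)) → a = b ∨ (a = ℓ ∧ b = 0) ∨ (a = 0 ∧ b = ℓ) := by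
    intro a b ha hb hab
    rw [ZMod.natCast_eq_natCast_iff'] at hab
    have ha' : a % ℓ = a ∨ (a = ℓ ∧ a % ℓ = 0) := by
      rcases Nat.lt_or_ge a ℓ with h | h
      · exact Or.inl (Nat.mod_eq_of_lt h)
      · refine Or.inr ⟨by omega, ?_⟩
        rw [show a = ℓ by omega]; exact Nat.mod_self ℓ
    have hb' : b % ℓ = b ∨ (b = ℓ ∧ b % ℓ = 0) := by
      rcases Nat.lt_or_ge b ℓ with h | h
      · exact Or.inl (Nat.mod_eq_of_lt h)
      · refine Or.inr ⟨by omega, ?_⟩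
        rw [show b = ℓ by omega]; exact Nat.mod_self ℓ
    omega
  apply cycle_of_fn (ℓ + 1) (by omega) g
  · -- injectivity
    intro a ha b hb hab
    rcases Nat.eq_zero_or_pos a with ha0 | ha1 <;> rcases Nat.eq_zero_or_pos b with hb0 | hb1
    · omega
    · exfalso; subst ha0; rw [hg0] at hab
      rcases le_or_gt b d with h | h
      · rw [hgmid b hb1 h] at hab; exact hz _ hab.symm
      · rw [hgtop b h] at hab; exact hz _ hab.symm
    · exfalso; subst hb0; rw [hg0] at hab
      rcases le_or_gt a d with h | h
      · rw [hgmid a ha1 h] at hab; exact hz _ hab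
      · rw [hgtop a h] at hab; exact hz _ hab
    · rcases le_or_gt a d with h | h <;> rcases le_or_gt b d with h' | h'
      · rw [hgmid a ha1 h, hgmid b hb1 h'] at hab
        have := hinj hab
        have : (a : ZMod ℓ) = (b : ZMod ℓ) := by
          have h2 : (j:ZMod ℓ) + 1 - a = j + 1 - b := this
          linear_combination -h2
        rcases hcast a b (by omega) (by omega) this with h | h | h <;> omega
      · -- a ≤ d < b : cross case
        exfalso
        rw [hgmid a ha1 h, hgtop b h'] at hab
        have := hinj hab
        have hsum : (((b - d) + a : ℕ) : ZMod ℓ) = ((1:ℕ) : ZMod ℓ) := by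
          push_cast
          linear_combination -this
        rcases hcast _ _ (by omega) (by omega) hsum with hh | hh | hh <;> omega
      · exfalso
        rw [hgmid b hb1 h', hgtop a h] at hab
        have := hinj hab
        have hsum : (((a - d) + b : ℕ) : ZMod ℓ) = ((1:ℕ) : ZMod ℓ) := by
          push_cast
          linear_combination this
        rcases hcast _ _ (by omega) (by omega) hsum with hh | hh | hh <;> omega
      · rw [hgtop a h, hgtop b h'] at hab
        have := hinj hab
        have : ((a - d : ℕ) : ZMod ℓ) = ((b - d : ℕ) : ZMod ℓ) := by
          linear_combination this
        rcases hcast _ _ (by omega) (by omega) this with hh | hh | hh <;> omega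
  · -- adjacency
    intro t ht
    rcases Nat.eq_zero_or_pos t with ht0 | ht1
    · subst ht0
      rw [hg0, hgmid 1 le_rfl hd0]
      simpa using hzj
    · rcases Nat.lt_or_ge t d with h | h
      · -- t+1 ≤ d
        rw [hgmid t ht1 (by omega), hgmid (t+1) (by omega) (by omega)]
        have e1 : (j:ZMod ℓ) + 1 - (t:ℕ) = (j - (t:ℕ)) + 1 := by ring
        have e2 : (j:ZMod ℓ) + 1 - ((t+1 : ℕ):ZMod ℓ) = j - (t:ℕ) := by push_cast; ring
        rw [e1, e2]
        exact (hadj _).symm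
      · rcases Nat.eq_or_lt_of_le h with heq | hlt
        · -- t = d : chord
          have htd : t = d := heq.symm
          rw [hgmid t ht1 (by omega), hgtop (t+1) (by omega)]
          have e1 : (j:ZMod ℓ) + 1 - ((t:ℕ) : ZMod ℓ) = i + 1 := by
            rw [htd, hdc]; ring
          have e15 : (t + 1 - d : ℕ) = 1 := by omega
          have e2 : (j:ZMod ℓ) + ((t + 1 - d : ℕ) : ZMod ℓ) = j + 1 := by
            rw [e15]; push_cast; ring
          rw [e1, e2]
          exact hch
        · -- d < t
          rw [hgtop t hlt, hgtop (t+1) (by omega)]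
          have e2 : (j:ZMod ℓ) + ((t + 1 - d : ℕ) : ZMod ℓ) = (j + ((t - d : ℕ) : ZMod ℓ)) + 1 := by
            have : (t + 1 - d : ℕ) = (t - d) + 1 := by omega
            rw [this]; push_cast; ring
          rw [e2]
          exact hadj _
  · -- wrap
    have e1 : (ℓ + 1 - 1 : ℕ) = ℓ := by omega
    rw [e1, hgtop ℓ hdl, hg0]
    have e2 : (j:ZMod ℓ) + ((ℓ - d : ℕ) : ZMod ℓ) = i := by
      rw [Nat.cast_sub (le_of_lt hdl), ZMod.natCast_self, hdc]; ring
    rw [e2]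
    exact hzi.symm

lemma pair_apply [DecidableEq V] {G : SimpleGraph V} (hE : HasEdgeBetween G 2 2) {a b x y : V}
    (hab : a ≠ b) (hxy : x ≠ y) (hax : a ≠ x) (hay : a ≠ y) (hbx : b ≠ x) (hby : b ≠ y) :
    G.Adj a x ∨ G.Adj a y ∨ G.Adj b x ∨ G.Adj b y := by
  obtain ⟨p, hp, q, hq, hpq⟩ := hE {a, b} {x, y}
    (by rw [Finset.disjoint_left]; intro t ht ht'; simp at ht ht'; rcases ht with rfl | rfl <;>
        rcases ht' with rfl | rfl <;> simp_all)
    (Finset.card_pair hab) (Finset.card_pair hxy)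
  simp only [Finset.mem_insert, Finset.mem_singleton] at hp hq
  rcases hp with rfl | rfl <;> rcases hq with rfl | rfl <;> tauto


end Aux

theorem cycle_extension_small_case [Fintype V] (G : SimpleGraph V)
    (hE : HasEdgeBetween G 2 2)
    (v : V) (c : G.Walk v v) (hc : c.IsCycle)
    (h6 : 6 ≤ c.length) (hn : c.length + 2 ≤ Fintype.card V) :
    ∃ (w : V) (c' : G.Walk w w), c'.IsCycle ∧ c'.length = c.length + 1 := by
  classical
  by_contra hno
  push_neg at hno
  set ℓ := c.length with hl
  haveI : NeZero ℓ := ⟨by omega⟩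
  set f : ZMod ℓ → V := fun k => c.getVert k.val with hf
  have hfinj : Function.Injective f := by
    intro a b hab
    have h2 := IsCycle.getVert_inj hc (ZMod.val_lt a) (ZMod.val_lt b) hab
    calc a = ((a.val : ℕ) : ZMod ℓ) := (ZMod.natCast_rightInverse a).symm
      _ = ((b.val : ℕ) : ZMod ℓ) := by rw [h2]
      _ = b := ZMod.natCast_rightInverse b
  have hfadj : ∀ k : ZMod ℓ, G.Adj (f k) (f (k + 1)) := by
    intro k
    have hk : k.val < ℓ := ZMod.val_lt k
    have hk1 : k + 1 = ((k.val + 1 : ℕ) : ZMod ℓ) := by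
      rw [Nat.cast_add, Nat.cast_one, ZMod.natCast_rightInverse k]
    rcases Nat.lt_or_ge (k.val + 1) ℓ with h | h
    · have hv : (k + 1).val = k.val + 1 := by rw [hk1, ZMod.val_cast_of_lt h]
      show G.Adj (c.getVert k.val) (c.getVert (k+1).val)
      rw [hv]
      exact c.adj_getVert_succ hk
    · have hv : (k + 1).val = 0 := by
        rw [hk1, show k.val + 1 = ℓ by omega, ZMod.natCast_self, ZMod.val_zero]
      show G.Adj (c.getVert k.val) (c.getVert (k+1).val)
      rw [hv, show k.val = ℓ - 1 by omega, Walk.getVert_zero]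
      have h3 := c.adj_getVert_succ (i := ℓ - 1) (by omega)
      rw [show ℓ - 1 + 1 = ℓ by omega, c.getVert_length] at h3
      exact h3
  -- two outside vertices
  have hS : (Finset.univ.image f).card = ℓ := by
    rw [Finset.card_image_of_injective _ hfinj, Finset.card_univ, ZMod.card]
  have hcard : 1 < (Finset.univ.image f)ᶜ.card := by
    rw [Finset.card_compl, hS]; omega
  obtain ⟨x, hx, y, hy, hxy⟩ := Finset.one_lt_card.mp hcard
  rw [Finset.mem_compl] at hx hy
  have hfx : ∀ k, f k ≠ x := fun k hk => hx (Finset.mem_image.mpr ⟨k, Finset.mem_univ k, hk⟩)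
  have hfy : ∀ k, f k ≠ y := fun k hk => hy (Finset.mem_image.mpr ⟨k, Finset.mem_univ k, hk⟩)
  -- cast helpers
  have hne : ∀ a : ℕ, 0 < a → a < ℓ → ((a : ZMod ℓ) ≠ 0) := by
    intro a h1 h2 h
    rw [show (0 : ZMod ℓ) = ((0:ℕ) : ZMod ℓ) by simp, ZMod.natCast_eq_natCast_iff',
      Nat.mod_eq_of_lt h2, Nat.mod_eq_of_lt (by omega)] at h
    omega
  -- bridge consequences
  have hbridge : ∀ (z : V) (i j : ZMod ℓ), (∀ k, f k ≠ z) → i ≠ j → G.Adj z (f i) →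
      G.Adj z (f j) → G.Adj (f (i+1)) (f (j+1)) → False := by
    intro z i j hz hij hzi hzj hch
    obtain ⟨w, cc, h1, h2⟩ := bridge_cycle h6 f hfinj hfadj hz hij hzi hzj hch
    exact hno w cc h1 h2
  have hbridge' : ∀ (z : V) (i j : ZMod ℓ), (∀ k, f k ≠ z) → i ≠ j → G.Adj z (f i) →
      G.Adj z (f j) → G.Adj (f (i-1)) (f (j-1)) → False := by
    intro z i j hz hij hzi hzj hch
    have hadj' : ∀ k : ZMod ℓ, G.Adj (f (-k)) (f (-(k+1))) := by
      intro k
      have h3 := (hfadj (-(k+1))).symm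
      rwa [show -(k+1) + 1 = -k by ring] at h3
    obtain ⟨w, cc, h1, h2⟩ := bridge_cycle h6 (fun k => f (-k))
      (fun a b h => neg_injective (hfinj h)) hadj' (z := z) (i := -i) (j := -j)
      (fun k => hz (-k)) (fun h => hij (neg_injective h))
      (by show G.Adj z (f (- -i)); rw [neg_neg]; exact hzi)
      (by show G.Adj z (f (- -j)); rw [neg_neg]; exact hzj)
      (by show G.Adj (f (-(-i+1))) (f (-(-j+1)))
          rw [show -(-i+1) = i - 1 by ring, show -(-j+1) = j - 1 by ring]; exact hch)
    exact hno w cc h1 h2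
  -- W1 : no outside vertex adjacent to two consecutive cycle vertices
  have hW1 : ∀ (z : V) (k : ZMod ℓ), (∀ m, f m ≠ z) → G.Adj z (f k) → G.Adj z (f (k+1)) → False := by
    intro z k hz h1 h2
    exact hbridge z k (k+1) hz
      (by intro h; exact hne 1 (by omega) (by omega) (by linear_combination -h)) h1 h2 (hfadj (k+1))
  -- W2 : no outside vertex adjacent to two cycle vertices at distance 2
  have hW2 : ∀ (z : V) (k : ZMod ℓ), (∀ m, f m ≠ z) → G.Adj z (f k) → G.Adj z (f (k+2)) → False := by
    intro z k hz h1 h2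
    have hne2 : ∀ p q : ZMod ℓ, p - q = 2 → p ≠ q := by
      intro p q hpq h
      exact hne 2 (by omega) (by omega) (by rw [h] at hpq; linear_combination -hpq)
    have pa := pair_apply hE (a := f (k-1)) (b := f (k+3)) (x := z) (y := f (k+1))
      (hfinj.ne (by intro h; exact hne 4 (by omega) (by omega) (by linear_combination -h)))
      (Ne.symm (hz (k+1)))
      (hz _)
      (hfinj.ne (by intro h; exact hne 2 (by omega) (by omega) (by linear_combination -h)))
      (hz _)
      (hfinj.ne (by intro h; exact hne 2 (by omega) (by omega) (by linear_combination h)))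
    rcases pa with h | h | h | h
    · exact hW1 z (k-1) hz h.symm (by rw [show k - 1 + 1 = k by ring]; exact h1)
    · exact hbridge' z k (k+2) hz (hne2 _ _ (by ring)).symm h1 h2
        (by rw [show k + 2 - 1 = k + 1 by ring]; exact h)
    · exact hW1 z (k+2) hz h2 (by rw [show k + 2 + 1 = k + 3 by ring]; exact h.symm)
    · exact hbridge z k (k+2) hz (hne2 _ _ (by ring)).symm h1 h2
        (by rw [show k + 2 + 1 = k + 3 by ring]; exact h.symm)
  -- endgame core
  have hcore : ∀ (z w : V) (i j : ZMod ℓ), (∀ m, f m ≠ z) → (∀ m, f m ≠ w) → z ≠ w → i ≠ j →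
      G.Adj z (f i) → G.Adj z (f j) → G.Adj w (f (i+1)) → False := by
    intro z w i j hz hw hzw hij hzi hzj hwi1
    have hji1 : j ≠ i + 1 := by intro h; exact hW1 z i hz hzi (h ▸ hzj)
    have pa := pair_apply hE (a := f (i-1)) (b := f (j-1)) (x := z) (y := w)
      (hfinj.ne (by intro h; apply hij; linear_combination h)) hzw
      (hz _) (hw _) (hz _) (hw _)
    rcases pa with h | h | h | h
    · exact hW1 z (i-1) hz h.symm (by rw [show i - 1 + 1 = i by ring]; exact hzi)
    · exact hW2 w (i-1) hw h.symm (by rw [show i - 1 + 2 = i + 1 by ring]; exact hwi1)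
    · exact hW1 z (j-1) hz h.symm (by rw [show j - 1 + 1 = j by ring]; exact hzj)
    · have hne24 : f (i+2) ≠ f (j+1) := hfinj.ne (by
        intro hh; apply hji1; linear_combination -hh)
      have pb := pair_apply hE (a := f (i+2)) (b := f (j+1)) (x := z) (y := w)
        hne24 hzw (hz _) (hw _) (hz _) (hw _)
      rcases pb with h' | h' | h' | h'
      · exact hW2 z i hz hzi h'.symm
      · exact hW1 w (i+1) hw hwi1 (by rw [show i + 1 + 1 = i + 2 by ring]; exact h'.symm)
      · exact hW1 z j hz hzj h'.symm
      · exact hW2 w (j-1) hw h.symm (by rw [show j - 1 + 2 = j + 1 by ring]; exact h'.symm)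
  -- endgame
  have hend : ∀ (z w : V) (i j : ZMod ℓ), (∀ m, f m ≠ z) → (∀ m, f m ≠ w) → z ≠ w → i ≠ j →
      G.Adj z (f i) → G.Adj z (f j) → False := by
    intro z w i j hz hw hzw hij hzi hzj
    have pa := pair_apply hE (a := f (i+1)) (b := f (j+1)) (x := z) (y := w)
      (hfinj.ne (by intro h; apply hij; linear_combination h)) hzw
      (hz _) (hw _) (hz _) (hw _)
    rcases pa with h | h | h | h
    · exact hW1 z i hz hzi h.symm
    · exact hcore z w i j hz hw hzw hij hzi hzj h.symm
    · exact hW1 z j hz hzj h.symm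
    · exact hcore z w j i hz hw hzw (Ne.symm hij) hzj hzi h.symm
  -- cast distinctness for small indices
  have hsmall : ∀ a b : ℕ, a < 6 → b < 6 → a ≠ b → ((a : ZMod ℓ) ≠ (b : ZMod ℓ)) := by
    intro a b ha hb hab h
    rw [ZMod.natCast_eq_natCast_iff', Nat.mod_eq_of_lt (by omega), Nat.mod_eq_of_lt (by omega)] at h
    omega
  -- F1 : every cycle edge has a neighbour among {x, y}
  have hF1 : ∀ a : ℕ, a + 1 < 6 →
      ∃ m : ℕ, (m = a ∨ m = a + 1) ∧ (G.Adj x (f (m : ZMod ℓ)) ∨ G.Adj y (f (m : ZMod ℓ))) := by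
    intro a ha
    have pa := pair_apply hE (a := x) (b := y) (x := f (a : ZMod ℓ)) (y := f ((a+1 : ℕ) : ZMod ℓ))
      hxy (hfinj.ne (hsmall a (a+1) (by omega) (by omega) (by omega)))
      (Ne.symm (hfx _)) (Ne.symm (hfx _)) (Ne.symm (hfy _)) (Ne.symm (hfy _))
    rcases pa with h | h | h | h
    · exact ⟨a, Or.inl rfl, Or.inl h⟩
    · exact ⟨a+1, Or.inr rfl, Or.inl h⟩
    · exact ⟨a, Or.inl rfl, Or.inr h⟩
    · exact ⟨a+1, Or.inr rfl, Or.inr h⟩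
  obtain ⟨m0, hm0, hadj0⟩ := hF1 0 (by omega)
  obtain ⟨m1, hm1, hadj1⟩ := hF1 2 (by omega)
  obtain ⟨m2, hm2, hadj2⟩ := hF1 4 (by omega)
  have hm01 : (m0 : ZMod ℓ) ≠ (m1 : ZMod ℓ) := hsmall _ _ (by omega) (by omega) (by omega)
  have hm02 : (m0 : ZMod ℓ) ≠ (m2 : ZMod ℓ) := hsmall _ _ (by omega) (by omega) (by omega)
  have hm12 : (m1 : ZMod ℓ) ≠ (m2 : ZMod ℓ) := hsmall _ _ (by omega) (by omega) (by omega)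
  rcases hadj0 with h0 | h0 <;> rcases hadj1 with h1 | h1 <;> rcases hadj2 with h2 | h2
  · exact hend x y _ _ hfx hfy hxy hm01 h0 h1
  · exact hend x y _ _ hfx hfy hxy hm01 h0 h1
  · exact hend x y _ _ hfx hfy hxy hm02 h0 h2
  · exact hend y x _ _ hfy hfx (Ne.symm hxy) hm12 h1 h2
  · exact hend x y _ _ hfx hfy hxy hm12 h1 h2
  · exact hend y x _ _ hfy hfx (Ne.symm hxy) hm02 h0 h2
  · exact hend y x _ _ hfy hfx (Ne.symm hxy) hm01 h0 h1
  · exact hend y x _ _ hfy hfx (Ne.symm hxy) hm01 h0 h1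
end

section
/- Let G be a finite simple graph on at least 8 vertices such that between every two disjoint vertex sets of size 2 there is an edge, and suppose G contains a triangle. Then G contains a cycle of length 4. -/
open SimpleGraph Finset

variable {V : Type*}

lemma c4lem (G : SimpleGraph V) {p q r s : V} (hpq : G.Adj p q) (hqr : G.Adj q r)
    (hrs : G.Adj r s) (hsp : G.Adj s p) (hpr : p ≠ r) (hqs : q ≠ s) :
    ∃ (w : V) (c : G.Walk w w), c.IsCycle ∧ c.length = 4 := by
  refine ⟨p, Walk.cons hpq (Walk.cons hqr (Walk.cons hrs (Walk.cons hsp Walk.nil))), ?_, rfl⟩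
  have hpq' := hpq.ne
  have hqr' := hqr.ne
  have hrs' := hrs.ne
  have hsp' := hsp.ne
  refine ⟨⟨?_, by simp⟩, ?_⟩
  · simp [Walk.isTrail_def, List.Nodup, Sym2.eq, Sym2.rel_iff']
    aesop
  · simp [List.Nodup]
    aesop

theorem four_cycle_of_triangle [Fintype V] (G : SimpleGraph V)
    (hn : 8 ≤ Fintype.card V)
    (hE : HasEdgeBetween G 2 2)
    (htri : ∃ x y z : V, G.Adj x y ∧ G.Adj y z ∧ G.Adj x z) :
    ∃ (w : V) (c : G.Walk w w), c.IsCycle ∧ c.length = 4 := by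
  classical
  by_contra hc
  obtain ⟨a, b, c, hab, hbc, hac⟩ := htri
  have c4 : ∀ p q r s : V, G.Adj p q → G.Adj q r → G.Adj r s → G.Adj s p →
      p ≠ r → q ≠ s → False := fun p q r s h1 h2 h3 h4 h5 h6 =>
    hc (c4lem G h1 h2 h3 h4 h5 h6)
  have key : ∀ t1 t2 t3 u : V, G.Adj t1 t2 → G.Adj t2 t3 → G.Adj t1 t3 →
      G.Adj t1 u → G.Adj t2 u → u ≠ t3 → False := by
    intro t1 t2 t3 u h12 h23 h13 h1u h2u hu3
    exact c4 u t1 t3 t2 h1u.symm h13 h23.symm h2u hu3 h12.ne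
  have habc : (a : V) ≠ b := hab.ne
  have hbcne : (b : V) ≠ c := hbc.ne
  have hacne : (a : V) ≠ c := hac.ne
  set U : Finset V := Finset.univ \ {a, b, c} with hUdef
  have hUcard : 5 ≤ U.card := by
    have h3 : ({a, b, c} : Finset V).card ≤ 3 := by
      apply le_trans (card_insert_le _ _)
      have := card_insert_le b ({c} : Finset V)
      simp at this ⊢
      omega
    have hs := card_sdiff_of_subset (subset_univ ({a, b, c} : Finset V))
    rw [hUdef, hs]
    simp only [card_univ]
    omega
  have hUmem : ∀ u ∈ U, u ≠ a ∧ u ≠ b ∧ u ≠ c := by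
    intro u hu
    simp [hUdef] at hu
    tauto
  have L1ab : ∀ u ∈ U, G.Adj a u → G.Adj b u → False := fun u hu h1 h2 =>
    key a b c u hab hbc hac h1 h2 (hUmem u hu).2.2
  have L1ac : ∀ u ∈ U, G.Adj a u → G.Adj c u → False := fun u hu h1 h2 =>
    key a c b u hac hbc.symm hab h1 h2 (hUmem u hu).2.1
  have L1bc : ∀ u ∈ U, G.Adj b u → G.Adj c u → False := fun u hu h1 h2 =>
    key b c a u hbc hac.symm hab.symm h1 h2 (hUmem u hu).1
  -- L2 : two distinct vertices of U adjacent to the same triangle vertex → False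
  have L2 : ∀ t1 t2 t3 : V, t2 ≠ t3 →
      (∀ u ∈ U, G.Adj t1 u → G.Adj t2 u → False) →
      (∀ u ∈ U, G.Adj t1 u → G.Adj t3 u → False) →
      (∀ u ∈ U, u ≠ t2 ∧ u ≠ t3) →
      ∀ u ∈ U, ∀ u' ∈ U, u ≠ u' → G.Adj t1 u → G.Adj t1 u' → False := by
    intro t1 t2 t3 h23 K2 K3 hne u hu u' hu' huu' h1 h1'
    have hd : Disjoint ({u, u'} : Finset V) ({t2, t3} : Finset V) := by
      obtain ⟨hu2, hu3⟩ := hne u hu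
      obtain ⟨hu2', hu3'⟩ := hne u' hu'
      simp [Finset.disjoint_left]
      tauto
    obtain ⟨x, hx, y, hy, hxy⟩ := hE {u, u'} {t2, t3} hd
      (by rw [card_insert_of_notMem (by simp [huu']), card_singleton])
      (by rw [card_insert_of_notMem (by simp [h23]), card_singleton])
    simp at hx hy
    rcases hx with rfl | rfl <;> rcases hy with rfl | rfl
    · exact K2 x hu h1 hxy.symm
    · exact K3 x hu h1 hxy.symm
    · exact K2 x hu' h1' hxy.symm
    · exact K3 x hu' h1' hxy.symm
  have hne_bc : ∀ u ∈ U, u ≠ b ∧ u ≠ c := fun u hu => ⟨(hUmem u hu).2.1, (hUmem u hu).2.2⟩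
  have hne_ac : ∀ u ∈ U, u ≠ a ∧ u ≠ c := fun u hu => ⟨(hUmem u hu).1, (hUmem u hu).2.2⟩
  have hne_ab : ∀ u ∈ U, u ≠ a ∧ u ≠ b := fun u hu => ⟨(hUmem u hu).1, (hUmem u hu).2.1⟩
  have L2a := L2 a b c hbcne L1ab L1ac hne_bc
  have L2b := L2 b a c hacne (fun u hu h1 h2 => L1ab u hu h2 h1) L1bc hne_ac
  have L2c := L2 c a b habc (fun u hu h1 h2 => L1ac u hu h2 h1)
    (fun u hu h1 h2 => L1bc u hu h2 h1) hne_ab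
  -- counting
  set Ta : Finset V := U.filter (fun u => G.Adj a u) with hTa
  set Tb : Finset V := U.filter (fun u => G.Adj b u) with hTb
  set Tc : Finset V := U.filter (fun u => G.Adj c u) with hTc
  have hTa1 : Ta.card ≤ 1 := card_le_one.mpr (by
    intro u hu v hv
    simp [hTa] at hu hv
    by_contra hne
    exact L2a u hu.1 v hv.1 hne hu.2 hv.2)
  have hTb1 : Tb.card ≤ 1 := card_le_one.mpr (by
    intro u hu v hv
    simp [hTb] at hu hv
    by_contra hne
    exact L2b u hu.1 v hv.1 hne hu.2 hv.2)
  have hTc1 : Tc.card ≤ 1 := card_le_one.mpr (by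
    intro u hu v hv
    simp [hTc] at hu hv
    by_contra hne
    exact L2c u hu.1 v hv.1 hne hu.2 hv.2)
  set T : Finset V := U.filter (fun u => G.Adj a u ∨ G.Adj b u ∨ G.Adj c u) with hT
  have hTsub : T ⊆ Ta ∪ Tb ∪ Tc := by
    intro u hu
    simp [hT, hTa, hTb, hTc] at hu ⊢
    tauto
  have hT3 : T.card ≤ 3 := by
    calc T.card ≤ (Ta ∪ Tb ∪ Tc).card := card_le_card hTsub
    _ ≤ (Ta ∪ Tb).card + Tc.card := card_union_le _ _
    _ ≤ Ta.card + Tb.card + Tc.card := by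
        have := card_union_le Ta Tb
        omega
    _ ≤ 3 := by omega
  have hTU : T ⊆ U := filter_subset _ _
  have hW : 2 ≤ (U \ T).card := by
    have := card_sdiff_of_subset hTU
    omega
  obtain ⟨u, hu⟩ := card_pos.mp (by omega : 0 < (U \ T).card)
  have h1 : 1 ≤ ((U \ T).erase u).card := by
    rw [card_erase_of_mem hu]
    omega
  obtain ⟨v, hv⟩ := card_pos.mp (by omega : 0 < ((U \ T).erase u).card)
  have hvu : v ≠ u := (mem_erase.mp hv).1
  have hv' : v ∈ U \ T := (mem_erase.mp hv).2
  have huU : u ∈ U := (mem_sdiff.mp hu).1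
  have hvU : v ∈ U := (mem_sdiff.mp hv').1
  have husafe : ¬ (G.Adj a u ∨ G.Adj b u ∨ G.Adj c u) := by
    have := (mem_sdiff.mp hu).2
    simp [hT, huU] at this
    tauto
  have hvsafe : ¬ (G.Adj a v ∨ G.Adj b v ∨ G.Adj c v) := by
    have := (mem_sdiff.mp hv').2
    simp [hT, hvU] at this
    tauto
  have hd : Disjoint ({u, v} : Finset V) ({a, b} : Finset V) := by
    obtain ⟨h1', h2', _⟩ := hUmem u huU
    obtain ⟨h1'', h2'', _⟩ := hUmem v hvU
    simp [Finset.disjoint_left]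
    tauto
  obtain ⟨x, hx, y, hy, hxy⟩ := hE {u, v} {a, b} hd
    (by rw [card_insert_of_notMem (by simp [hvu.symm]), card_singleton])
    (by rw [card_insert_of_notMem (by simp [habc]), card_singleton])
  simp at hx hy
  rcases hx with rfl | rfl <;> rcases hy with rfl | rfl
  · exact husafe (Or.inl hxy.symm)
  · exact husafe (Or.inr (Or.inl hxy.symm))
  · exact hvsafe (Or.inl hxy.symm)
  · exact hvsafe (Or.inr (Or.inl hxy.symm))
end

section
/- Let G be a finite simple graph such that between every two disjoint vertex sets of size 2 there is an edge. Then for every pair of distinct vertices u, v of G, at least one of u, v has degree at least (|V(G)| − 3)/2. -/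
open SimpleGraph Finset

variable {V : Type*}

theorem degree_lower_bound [Fintype V] (G : SimpleGraph V) [DecidableRel G.Adj]
    (hE : HasEdgeBetween G 2 2) (u v : V) (huv : u ≠ v) :
    ((Fintype.card V : ℝ) - 3) / 2 ≤ G.degree u ∨
      ((Fintype.card V : ℝ) - 3) / 2 ≤ G.degree v := by
  classical
  set S : Finset V :=
    Finset.univ \ ({u, v} ∪ G.neighborFinset u ∪ G.neighborFinset v) with hS
  have hScard : S.card ≤ 1 := by
    by_contra h
    push_neg at h
    obtain ⟨B, hBS, hB2⟩ := Finset.exists_subset_card_eq (show 2 ≤ S.card from h)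
    have hdisj : Disjoint ({u, v} : Finset V) B := by
      rw [Finset.disjoint_left]
      intro a ha haB
      have := hBS haB
      rw [hS, Finset.mem_sdiff] at this
      exact this.2 (Finset.mem_union_left _ (Finset.mem_union_left _ ha))
    obtain ⟨x, hx, y, hy, hxy⟩ := hE {u, v} B hdisj
      (by rw [Finset.card_insert_of_notMem (by simpa using huv), Finset.card_singleton]) hB2
    have hyS := hBS hy
    rw [hS, Finset.mem_sdiff] at hyS
    rcases Finset.mem_insert.1 hx with rfl | hx
    · exact hyS.2 (Finset.mem_union_left _ <| Finset.mem_union_right _ <|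
        (G.mem_neighborFinset _ _).2 hxy)
    · rw [Finset.mem_singleton] at hx
      subst hx
      exact hyS.2 (Finset.mem_union_right _ <| (G.mem_neighborFinset _ _).2 hxy)
  have hcard : Fintype.card V ≤ 3 + G.degree u + G.degree v := by
    have h1 : S.card + ({u, v} ∪ G.neighborFinset u ∪ G.neighborFinset v).card =
        Fintype.card V := by
      rw [hS, Finset.card_sdiff_add_card]
      rw [Finset.union_eq_left.2 (Finset.subset_univ _), Finset.card_univ]
    have h2 : ({u, v} ∪ G.neighborFinset u ∪ G.neighborFinset v).card ≤
        2 + G.degree u + G.degree v := by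
      calc ({u, v} ∪ G.neighborFinset u ∪ G.neighborFinset v).card
          ≤ ({u, v} ∪ G.neighborFinset u : Finset V).card + (G.neighborFinset v).card :=
            Finset.card_union_le _ _
        _ ≤ (({u, v} : Finset V).card + (G.neighborFinset u).card) +
              (G.neighborFinset v).card := by
            exact Nat.add_le_add_right (Finset.card_union_le _ _) _
        _ ≤ 2 + G.degree u + G.degree v := by
            rw [G.card_neighborFinset_eq_degree, G.card_neighborFinset_eq_degree]
            have : ({u, v} : Finset V).card ≤ 2 := Finset.card_insert_le _ _ |>.trans (by simp)
            omega
    omega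
  by_contra hcon
  push_neg at hcon
  obtain ⟨h1, h2⟩ := hcon
  have hc : (Fintype.card V : ℝ) ≤ 3 + G.degree u + G.degree v := by exact_mod_cast hcard
  linarith
end

section
/- Let G be a finite simple graph, let C be a cycle of length ℓ ≥ 6 in G, and let x be a vertex not on C with at least 3 neighbors on C. Fix an orientation of C and for v on C let v⁻ denote the predecessor of v. Suppose x has neighbors z₁, z₂, z₃ on C, no two of which are consecutive on C, and suppose there is an edge between the sets {z₁⁻, x} and {z₂⁻, z₃⁻}. Then G contains a cycle of length ℓ + 1 whose vertex set is V(C) ∪ {x}. -/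
open SimpleGraph Finset

variable {V : Type*}

namespace CycleRot

variable {G : SimpleGraph V}

def chainWalk (G : SimpleGraph V) (g : ℕ → V) :
    (n : ℕ) → (∀ k, k < n → G.Adj (g k) (g (k + 1))) → G.Walk (g 0) (g n)
  | 0, _ => Walk.nil
  | n + 1, h => (chainWalk G g n (fun k hk => h k (by omega))).concat (h n (by omega))

lemma chainWalk_length (g : ℕ → V) (n : ℕ) (h : ∀ k, k < n → G.Adj (g k) (g (k + 1))) :
    (chainWalk G g n h).length = n := by
  induction n with
  | zero => rfl
  | succ n ih => simp [chainWalk, Walk.length_concat, ih]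

lemma chainWalk_support (g : ℕ → V) (n : ℕ) (h : ∀ k, k < n → G.Adj (g k) (g (k + 1))) :
    (chainWalk G g n h).support = (List.range (n + 1)).map g := by
  induction n with
  | zero => rfl
  | succ n ih => simp [chainWalk, Walk.support_concat, ih, List.range_succ (n := n + 1)]

lemma chainWalk_edges (g : ℕ → V) (n : ℕ) (h : ∀ k, k < n → G.Adj (g k) (g (k + 1))) :
    (chainWalk G g n h).edges = (List.range n).map (fun k => s(g k, g (k + 1))) := by
  induction n with
  | zero => rfl
  | succ n ih => simp [chainWalk, Walk.edges_concat, ih, List.range_succ (n := n)]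

lemma nodup_map_range {α : Type*} (N : ℕ) (F : ℕ → α)
    (h : ∀ j < N, ∀ k < N, F j = F k → j = k) : ((List.range N).map F).Nodup := by
  refine List.Nodup.map_on ?_ List.nodup_range
  intro a ha b hb hab
  exact h a (List.mem_range.mp ha) b (List.mem_range.mp hb) hab

lemma exists_cycle_of_fn (G : SimpleGraph V) (m : ℕ) (hm : 3 ≤ m) (g : ℕ → V)
    (ginj : ∀ j < m, ∀ k < m, g j = g k → j = k)
    (hstep : ∀ k, k + 1 < m → G.Adj (g k) (g (k + 1)))
    (hlast : G.Adj (g (m - 1)) (g 0)) :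
    ∃ (w : V) (c : G.Walk w w), c.IsCycle ∧ c.length = m ∧
      {y | y ∈ c.support} = {y | ∃ k < m, g k = y} := by
  obtain ⟨n, rfl⟩ : ∃ n, m = n + 1 := ⟨m - 1, by omega⟩
  have hn : 2 ≤ n := by omega
  have hlast' : G.Adj (g n) (g 0) := by simpa using hlast
  set p := chainWalk G g n (fun k hk => hstep k (by omega)) with hp
  set c : G.Walk (g 0) (g 0) := p.concat hlast' with hc
  have hsupp : c.support = (List.range (n + 1)).map g ++ [g 0] := by
    rw [hc, Walk.support_concat, chainWalk_support]
  have hedges : c.edges = ((List.range n).map (fun k => s(g k, g (k + 1)))) ++ [s(g n, g 0)] := by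
    rw [hc, Walk.edges_concat, chainWalk_edges]
    simp
  refine ⟨g 0, c, ⟨⟨⟨?_⟩, ?_⟩, ?_⟩, ?_, ?_⟩
  · -- edges nodup
    rw [hedges]
    have : ((List.range n).map (fun k => s(g k, g (k + 1)))) ++ [s(g n, g 0)]
        = (List.range (n + 1)).map
            (fun k => if k = n then s(g n, g 0) else s(g k, g (k + 1))) := by
      rw [List.range_succ, List.map_append]
      congr 1
      · refine (List.map_congr_left ?_).symm
        intro a ha
        have : a < n := List.mem_range.mp ha
        simp [Nat.ne_of_lt this]
      · simp
    rw [this]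
    apply nodup_map_range
    intro j hj k hk hF
    by_cases hjn : j = n <;> by_cases hkn : k = n <;> simp [hjn, hkn] at hF ⊢
    · rcases hF with ⟨h1, h2⟩ | ⟨h1, h2⟩
      · have := ginj n (by omega) k (by omega) h1
        omega
      · have e1 := ginj n (by omega) (k + 1) (by omega) h1
        have e2 := ginj 0 (by omega) k (by omega) h2
        omega
    · rcases hF with ⟨h1, h2⟩ | ⟨h1, h2⟩
      · have := ginj j (by omega) n (by omega) h1
        omega
      · have e1 := ginj j (by omega) 0 (by omega) h1
        have e2 := ginj (j + 1) (by omega) n (by omega) h2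
        omega
    · rcases hF with ⟨h1, h2⟩ | ⟨h1, h2⟩
      · exact ginj j (by omega) k (by omega) h1
      · have e1 := ginj j (by omega) (k + 1) (by omega) h1
        have e2 := ginj (j + 1) (by omega) k (by omega) h2
        omega
  · -- ne nil
    intro h
    have := congrArg Walk.length h
    rw [hc, Walk.length_concat, chainWalk_length] at this
    simp at this
  · -- support tail nodup
    rw [hsupp, List.range_succ_eq_map, List.map_cons]
    simp only [List.cons_append, List.tail_cons]
    have : (List.map g (List.map Nat.succ (List.range n))) ++ [g 0]
        = (List.range (n + 1)).map (fun k => if k = n then g 0 else g (k + 1)) := by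
      rw [List.range_succ, List.map_append, List.map_map]
      congr 1
      · refine (List.map_congr_left ?_).symm
        intro a ha
        have : a < n := List.mem_range.mp ha
        simp [Nat.ne_of_lt this, Nat.succ_eq_add_one]
      · simp
    rw [this]
    apply nodup_map_range
    intro j hj k hk hF
    by_cases hjn : j = n <;> by_cases hkn : k = n <;> simp [hjn, hkn] at hF ⊢
    · have := ginj 0 (by omega) (k + 1) (by omega) hF
      omega
    · have := ginj (j + 1) (by omega) 0 (by omega) hF
      omega
    · have := ginj (j + 1) (by omega) (k + 1) (by omega) hF
      omega
  · -- length
    rw [hc, Walk.length_concat, chainWalk_length]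
  · -- support set
    ext y
    simp only [Set.mem_setOf_eq, hsupp, List.mem_append, List.mem_map, List.mem_range,
      List.mem_singleton]
    constructor
    · rintro (⟨k, hk, rfl⟩ | rfl)
      · exact ⟨k, by omega, rfl⟩
      · exact ⟨0, by omega, rfl⟩
    · rintro ⟨k, hk, rfl⟩
      exact Or.inl ⟨k, by omega, rfl⟩


lemma cast_inj_lt {ℓ : ℕ} (hℓ : 0 < ℓ) {j k : ℕ} (hj : j < ℓ) (hk : k < ℓ)
    (h : (j : ZMod ℓ) = (k : ZMod ℓ)) : j = k := by
  haveI : NeZero ℓ := ⟨by omega⟩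
  have := congrArg ZMod.val h
  rwa [ZMod.val_cast_of_lt hj, ZMod.val_cast_of_lt hk] at this

lemma construct (G : SimpleGraph V) (ℓ : ℕ) (hℓ : 3 ≤ ℓ)
    (f : ZMod ℓ → V) (hinj : Function.Injective f)
    (x : V) (hx : x ∉ Set.range f)
    (e : ℕ → ZMod ℓ)
    (einj : ∀ j < ℓ, ∀ k < ℓ, e j = e k → j = k)
    (esurj : ∀ i : ZMod ℓ, ∃ k < ℓ, e k = i)
    (h0 : G.Adj x (f (e 0)))
    (hstep : ∀ k, k + 1 < ℓ → G.Adj (f (e k)) (f (e (k + 1))))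
    (hlast : G.Adj (f (e (ℓ - 1))) x) :
    ∃ (w : V) (c : G.Walk w w), c.IsCycle ∧ c.length = ℓ + 1 ∧
      {y | y ∈ c.support} = Set.range f ∪ {x} := by
  set g : ℕ → V := fun k => if k = 0 then x else f (e (k - 1)) with hg
  have ginj : ∀ j < ℓ + 1, ∀ k < ℓ + 1, g j = g k → j = k := by
    intro j hj k hk hjk
    by_cases hj0 : j = 0 <;> by_cases hk0 : k = 0 <;> simp [hg, hj0, hk0] at hjk ⊢
    · exact absurd ⟨e (k - 1), hjk.symm⟩ hx
    · exact absurd ⟨e (j - 1), hjk⟩ hx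
    · have := einj (j - 1) (by omega) (k - 1) (by omega) (hinj hjk)
      omega
  have gstep : ∀ k, k + 1 < ℓ + 1 → G.Adj (g k) (g (k + 1)) := by
    intro k hk
    by_cases hk0 : k = 0
    · subst hk0
      simpa [hg] using h0
    · have h1 : k - 1 + 1 = k := by omega
      have := hstep (k - 1) (by omega)
      rw [h1] at this
      simpa [hg, hk0] using this
  have glast : G.Adj (g (ℓ + 1 - 1)) (g 0) := by
    have h1 : ℓ + 1 - 1 = ℓ := by omega
    rw [h1]
    have h0' : ℓ ≠ 0 := by omega
    simpa [hg, h0'] using hlast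
  obtain ⟨w, c, hc1, hc2, hc3⟩ := exists_cycle_of_fn G (ℓ + 1) (by omega) g ginj gstep glast
  refine ⟨w, c, hc1, hc2, ?_⟩
  · 
    rw [hc3]
    ext y
    simp only [Set.mem_setOf_eq, Set.mem_union, Set.mem_range, Set.mem_singleton_iff]
    constructor
    · rintro ⟨k, hk, rfl⟩
      by_cases hk0 : k = 0
      · simp [hg, hk0]
      · exact Or.inl ⟨e (k - 1), by simp [hg, hk0]⟩
    · rintro (⟨i, rfl⟩ | rfl)
      · obtain ⟨k, hk, hek⟩ := esurj i
        exact ⟨k + 1, by omega, by simp [hg, hek]⟩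
      · exact ⟨0, by omega, by simp [hg]⟩


lemma cast_sub_one {ℓ : ℕ} (hℓ : 1 ≤ ℓ) {t : ℕ} (ht : t ≤ ℓ - 1) :
    ((ℓ - 1 - t : ℕ) : ZMod ℓ) = -1 - (t : ZMod ℓ) := by
  rw [Nat.cast_sub ht, Nat.cast_sub hℓ]
  simp [ZMod.natCast_self]

lemma case_insert (G : SimpleGraph V) (ℓ : ℕ) (hℓ : 6 ≤ ℓ)
    (f : ZMod ℓ → V) (hinj : Function.Injective f)
    (hadj : ∀ i : ZMod ℓ, G.Adj (f i) (f (i + 1)))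
    (x : V) (hx : x ∉ Set.range f) (a : ZMod ℓ)
    (hxa : G.Adj x (f a)) (hxb : G.Adj x (f (a - 1))) :
    ∃ (w : V) (c : G.Walk w w), c.IsCycle ∧ c.length = ℓ + 1 ∧
      {y | y ∈ c.support} = Set.range f ∪ {x} := by
  haveI : NeZero ℓ := ⟨by omega⟩
  refine construct G ℓ (by omega) f hinj x hx (fun k => a + (k : ZMod ℓ)) ?_ ?_ ?_ ?_ ?_
  · intro j hj k hk h
    exact cast_inj_lt (by omega) hj hk (by exact add_left_cancel h)
  · intro i
    refine ⟨(i - a).val, ZMod.val_lt _, ?_⟩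
    rw [ZMod.natCast_rightInverse (i - a)]
    ring
  · simpa using hxa
  · intro k hk
    rw [Nat.cast_add, Nat.cast_one, ← add_assoc]
    exact hadj _
  · have h1 : ((ℓ - 1 : ℕ) : ZMod ℓ) = -1 := by
      have := cast_sub_one (by omega : 1 ≤ ℓ) (t := 0) (by omega)
      simpa using this
    rw [h1]
    simpa [sub_eq_add_neg] using hxb.symm

lemma case_jump (G : SimpleGraph V) (ℓ : ℕ) (hℓ : 6 ≤ ℓ)
    (f : ZMod ℓ → V) (hinj : Function.Injective f)
    (hadj : ∀ i : ZMod ℓ, G.Adj (f i) (f (i + 1)))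
    (x : V) (hx : x ∉ Set.range f) (a b : ZMod ℓ)
    (hd2 : 2 ≤ (b - a).val) (hdle : (b - a).val ≤ ℓ - 2)
    (hxa : G.Adj x (f a)) (hxb : G.Adj x (f b))
    (hjump : G.Adj (f (a - 1)) (f (b - 1))) :
    ∃ (w : V) (c : G.Walk w w), c.IsCycle ∧ c.length = ℓ + 1 ∧
      {y | y ∈ c.support} = Set.range f ∪ {x} := by
  haveI : NeZero ℓ := ⟨by omega⟩
  set d : ℕ := (b - a).val with hd
  have hdcast : ((d : ℕ) : ZMod ℓ) = b - a := ZMod.natCast_rightInverse (b - a)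
  set σ : ℕ → ℕ := fun k => if k < d then k else ℓ - 1 - (k - d) with hσ
  have hσlt : ∀ k < ℓ, σ k < ℓ := by
    intro k hk
    simp only [hσ]
    split_ifs <;> omega
  refine construct G ℓ (by omega) f hinj x hx (fun k => a + ((σ k : ℕ) : ZMod ℓ))
    ?_ ?_ ?_ ?_ ?_
  · intro j hj k hk h
    have h2 : σ j = σ k :=
      cast_inj_lt (by omega) (hσlt j hj) (hσlt k hk) (by exact add_left_cancel h)
    simp only [hσ] at h2
    split_ifs at h2 <;> omega
  · intro i
    set t : ℕ := (i - a).val with htdef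
    have ht : t < ℓ := ZMod.val_lt _
    have htc : ((t : ℕ) : ZMod ℓ) = i - a := ZMod.natCast_rightInverse (i - a)
    by_cases htd : t < d
    · refine ⟨t, by omega, ?_⟩
      simp only [hσ]
      rw [if_pos htd, htc]
      ring
    · refine ⟨d + (ℓ - 1 - t), by omega, ?_⟩
      simp only [hσ]
      rw [if_neg (by omega), show d + (ℓ - 1 - t) - d = ℓ - 1 - t from by omega,
        show ℓ - 1 - (ℓ - 1 - t) = t from by omega, htc]
      ring
  · have : σ 0 = 0 := by simp only [hσ]; rw [if_pos (by omega)]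
    simp only [this]
    simpa using hxa
  · intro k hk
    by_cases h1 : k + 1 < d
    · simp only [hσ]
      rw [if_pos (by omega : k < d), if_pos h1]
      rw [Nat.cast_add, Nat.cast_one, ← add_assoc]
      exact hadj _
    · by_cases h2 : k + 1 = d
      · have ek : a + ((σ k : ℕ) : ZMod ℓ) = b - 1 := by
          simp only [hσ]
          rw [if_pos (by omega : k < d), show k = d - 1 from by omega,
            Nat.cast_sub (by omega : 1 ≤ d), hdcast]
          ring
        have ek1 : a + ((σ (k + 1) : ℕ) : ZMod ℓ) = a - 1 := by
          simp only [hσ]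
          rw [if_neg (by omega), show k + 1 - d = 0 from by omega]
          rw [cast_sub_one (by omega : 1 ≤ ℓ) (t := 0) (by omega)]
          push_cast
          ring
        rw [ek, ek1]
        exact hjump.symm
      · -- d ≤ k
        have hdk : d ≤ k := by omega
        have ek : a + ((σ k : ℕ) : ZMod ℓ) = a - 1 - ((k - d : ℕ) : ZMod ℓ) := by
          simp only [hσ]
          rw [if_neg (by omega), cast_sub_one (by omega : 1 ≤ ℓ) (by omega : k - d ≤ ℓ - 1)]
          ring
        have ek1 : a + ((σ (k + 1) : ℕ) : ZMod ℓ)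
            = a - 1 - ((k - d : ℕ) : ZMod ℓ) - 1 := by
          simp only [hσ]
          rw [if_neg (by omega), show k + 1 - d = (k - d) + 1 from by omega,
            cast_sub_one (by omega : 1 ≤ ℓ) (by omega : k - d + 1 ≤ ℓ - 1)]
          push_cast
          ring
        rw [ek, ek1]
        have h' := (hadj (a - 1 - ((k - d : ℕ) : ZMod ℓ) - 1)).symm
        rw [sub_add_cancel] at h'
        exact h'
  · have : σ (ℓ - 1) = d := by
      simp only [hσ]
      rw [if_neg (by omega), show ℓ - 1 - (ℓ - 1 - d) = d from by omega]
    simp only [this]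
    rw [hdcast, add_sub_cancel]
    exact hxb.symm


lemma dbound {ℓ : ℕ} (hℓ : 6 ≤ ℓ) {p q : ZMod ℓ} (hne : p ≠ q)
    (h1 : q ≠ p + 1) (h2 : p ≠ q + 1) : 2 ≤ (q - p).val ∧ (q - p).val ≤ ℓ - 2 := by
  haveI : NeZero ℓ := ⟨by omega⟩
  have hlt : (q - p).val < ℓ := ZMod.val_lt _
  have hval : (((q - p).val : ℕ) : ZMod ℓ) = q - p := ZMod.natCast_rightInverse (q - p)
  have h0 : (q - p).val ≠ 0 := by
    intro h
    apply hne
    have hz : q - p = 0 := (ZMod.val_eq_zero _).mp h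
    rw [sub_eq_zero] at hz
    exact hz.symm
  have hne1 : (q - p).val ≠ 1 := by
    intro h
    apply h1
    have hz : q - p = 1 := by rw [← hval, h]; simp
    rw [sub_eq_iff_eq_add] at hz
    rw [add_comm] at hz
    exact hz
  have hnel : (q - p).val ≠ ℓ - 1 := by
    intro h
    apply h2
    have hc : ((ℓ - 1 : ℕ) : ZMod ℓ) = -1 := by
      have := cast_sub_one (by omega : 1 ≤ ℓ) (t := 0) (by omega)
      simpa using this
    have hz : q - p = -1 := by rw [← hval, h, hc]
    have : p - q = 1 := by rw [← neg_sub, hz]; simp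
    rw [sub_eq_iff_eq_add] at this
    rw [add_comm] at this
    exact this
  omega

end CycleRot

theorem cycle_extension_rotation (G : SimpleGraph V) (ℓ : ℕ) (h6 : 6 ≤ ℓ)
    (f : ZMod ℓ → V) (hinj : Function.Injective f)
    (hadj : ∀ i : ZMod ℓ, G.Adj (f i) (f (i + 1)))
    (x : V) (hx : x ∉ Set.range f)
    (i₁ i₂ i₃ : ZMod ℓ)
    (h12 : i₁ ≠ i₂) (h13 : i₁ ≠ i₃) (h23 : i₂ ≠ i₃)
    (hz1 : G.Adj x (f i₁)) (hz2 : G.Adj x (f i₂)) (hz3 : G.Adj x (f i₃))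
    (hnoncons : ∀ j k : ZMod ℓ, j ∈ ({i₁, i₂, i₃} : Set (ZMod ℓ)) →
      k ∈ ({i₁, i₂, i₃} : Set (ZMod ℓ)) → j ≠ k → j ≠ k + 1)
    (hedge : ∃ u ∈ ({f (i₁ - 1), x} : Set V), ∃ w ∈ ({f (i₂ - 1), f (i₃ - 1)} : Set V),
      G.Adj u w) :
    ∃ (w : V) (c : G.Walk w w), c.IsCycle ∧ c.length = ℓ + 1 ∧
      {y | y ∈ c.support} = Set.range f ∪ {x} := by
  haveI : NeZero ℓ := ⟨by omega⟩
  have m1 : i₁ ∈ ({i₁, i₂, i₃} : Set (ZMod ℓ)) := by simp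
  have m2 : i₂ ∈ ({i₁, i₂, i₃} : Set (ZMod ℓ)) := by simp
  have m3 : i₃ ∈ ({i₁, i₂, i₃} : Set (ZMod ℓ)) := by simp
  obtain ⟨u, hu, w, hw, huw⟩ := hedge
  rcases hu with rfl | hu
  · -- u = f (i₁ - 1)
    rcases hw with rfl | hw
    · -- w = f (i₂ - 1)
      obtain ⟨hb1, hb2⟩ := CycleRot.dbound h6 h12 (hnoncons i₂ i₁ m2 m1 h12.symm)
        (hnoncons i₁ i₂ m1 m2 h12)
      exact CycleRot.case_jump G ℓ h6 f hinj hadj x hx i₁ i₂ hb1 hb2 hz1 hz2 huw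
    · -- w = f (i₃ - 1)
      rw [Set.mem_singleton_iff] at hw
      subst hw
      obtain ⟨hb1, hb2⟩ := CycleRot.dbound h6 h13 (hnoncons i₃ i₁ m3 m1 h13.symm)
        (hnoncons i₁ i₃ m1 m3 h13)
      exact CycleRot.case_jump G ℓ h6 f hinj hadj x hx i₁ i₃ hb1 hb2 hz1 hz3 huw
  · -- u = x
    rw [Set.mem_singleton_iff] at hu
    rw [hu] at huw
    rcases hw with rfl | hw
    · exact CycleRot.case_insert G ℓ h6 f hinj hadj x hx i₂ hz2 huw
    · rw [Set.mem_singleton_iff] at hw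
      rw [hw] at huw
      exact CycleRot.case_insert G ℓ h6 f hinj hadj x hx i₃ hz3 huw
end

section
/- Let G be a finite simple graph and suppose there exist positive integers a ≤ b such that every pair of disjoint vertex sets of sizes a and b has an edge between them. If u and v are two non-adjacent vertices of G with deg(u) ≥ b and deg(v) ≥ b, then there is a path in G from u to v. -/
open SimpleGraph Finset

variable {V : Type*}

theorem path_between_nonadjacent [Fintype V] (G : SimpleGraph V)
    [DecidableRel G.Adj]
    (a b : ℕ) (ha : 0 < a) (hab : a ≤ b) (hE : HasEdgeBetween G a b)
    (u v : V) (huv : u ≠ v) (hna : ¬ G.Adj u v)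
    (hu : b ≤ G.degree u) (hv : b ≤ G.degree v) :
    G.Reachable u v := by
  by_contra hR
  obtain ⟨A, hAsub, hAcard⟩ := Finset.exists_subset_card_eq (s := G.neighborFinset v) (n := a)
    (le_trans hab (by simpa using hv))
  obtain ⟨B, hBsub, hBcard⟩ := Finset.exists_subset_card_eq (s := G.neighborFinset u) (n := b)
    (by simpa using hu)
  have hAr : ∀ x ∈ A, G.Reachable v x := fun x hx =>
    ((G.mem_neighborFinset v x).1 (hAsub hx)).reachable
  have hBr : ∀ x ∈ B, G.Reachable u x := fun x hx =>
    ((G.mem_neighborFinset u x).1 (hBsub hx)).reachable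
  have hdisj : Disjoint A B := by
    rw [Finset.disjoint_left]
    intro x hxA hxB
    exact hR ((hBr x hxB).trans (hAr x hxA).symm)
  obtain ⟨x, hxA, y, hyB, hxy⟩ := hE A B hdisj hAcard hBcard
  exact hR ((hBr y hyB).trans (hxy.reachable.symm.trans (hAr x hxA).symm))
end
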